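/- Fix a generator t of ℤ/p and let x, z ∈ ℤⁿ satisfy Norm_t(x) = 0 and Norm_t(z) = 0. Then the cyclic subgroups of Γ = ℤⁿ ⋊_ρ ℤ/p generated by (x,t) and by (z,t) are conjugate in Γ if and only if x − z lies in the image of the endomorphism 1 − ρ(t) of ℤⁿ. -/

import Mathlib

/-- The multiplicative group structure that `AddAut A` carried in the older Mathlib
(`e₁ * e₂ = e₂.trans e₁`, `1 = refl`, `e⁻¹ = e.symm`); Mathlib now makes `AddAut A` an
additive group instead. -/
instance addAutOldGroup {A : Type*} [Add A] : Group (AddAut A) where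
  mul g h := AddEquiv.trans h g
  one := AddEquiv.refl _
  inv := AddEquiv.symm
  mul_assoc _ _ _ := rfl
  one_mul _ := rfl
  mul_one _ := rfl
  inv_mul_cancel := AddEquiv.self_trans_symm

/-- The monoid homomorphism sending an additive automorphism of `A` to the corresponding
multiplicative automorphism of `Multiplicative A`. -/
def addAutToMulAut {A : Type*} [AddGroup A] : AddAut A →* MulAut (Multiplicative A) where
  toFun e := AddEquiv.toMultiplicative e
  map_one' := rfl
  map_mul' _ _ := rfl

/-- The semidirect product `Γ = ℤⁿ ⋊_ρ ℤ/p` (written multiplicatively), with multiplication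
`(x,g)·(x',g') = (x + ρ(g)x', g+g')`. -/
abbrev Gam (p n : ℕ) (ρ : Multiplicative (ZMod p) →* AddAut (Fin n → ℤ)) : Type :=
  (Multiplicative (Fin n → ℤ)) ⋊[addAutToMulAut.comp ρ] (Multiplicative (ZMod p))

section Aux

variable {p n : ℕ} {ρ : Multiplicative (ZMod p) →* AddAut (Fin n → ℤ)}

lemma phi_apply (g : Multiplicative (ZMod p)) (l : Multiplicative (Fin n → ℤ)) :
    (addAutToMulAut.comp ρ) g l = Multiplicative.ofAdd ((ρ g) l.toAdd) := rfl

lemma gam_pow (y : Fin n → ℤ) (s : ZMod p) (k : ℕ) :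
    (⟨Multiplicative.ofAdd y, Multiplicative.ofAdd s⟩ : Gam p n ρ) ^ k =
      ⟨Multiplicative.ofAdd (∑ i ∈ Finset.range k, ((ρ (Multiplicative.ofAdd s)) ^ i) y),
        Multiplicative.ofAdd (k • s)⟩ := by
  induction k with
  | zero =>
    apply SemidirectProduct.ext <;> simp
  | succ k ih =>
    rw [pow_succ, ih]
    apply SemidirectProduct.ext
    · show _ * (addAutToMulAut.comp ρ) _ _ = _
      rw [phi_apply]
      show Multiplicative.ofAdd _ * Multiplicative.ofAdd _ = _
      rw [← ofAdd_add]
      congr 1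
      rw [Finset.sum_range_succ]
      congr 1
      simp only [toAdd_ofAdd]
      rw [ofAdd_nsmul, map_pow]
    · show Multiplicative.ofAdd (k • s) * Multiplicative.ofAdd s = _
      rw [← ofAdd_add, succ_nsmul]

lemma zpow_eq_pow_of_pow_eq_one {G : Type*} [Group G] {g : G} {q : ℕ} (hq : 0 < q)
    (h : g ^ q = 1) (j : ℤ) : ∃ e : ℕ, g ^ j = g ^ e := by
  refine ⟨(j % q).toNat, ?_⟩
  have hnn : (0:ℤ) ≤ j % q := Int.emod_nonneg j (by exact_mod_cast hq.ne')
  have h1 : g ^ j = g ^ ((q:ℤ) * (j / q)) * g ^ (j % q) := by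
    rw [← zpow_add, Int.mul_ediv_add_emod j q]
  rw [h1, zpow_mul, zpow_natCast, h, one_zpow, one_mul,
    ← zpow_natCast, Int.toNat_of_nonneg hnn]

end Aux

/-- for a generator `t` of `ℤ/p` and `x, z ∈ ℤⁿ` with `Norm_t(x) = Norm_t(z) = 0`,
the cyclic subgroups of `Γ = ℤⁿ ⋊_ρ ℤ/p` generated by `(x,t)` and `(z,t)` are conjugate in `Γ`
if and only if `x − z` lies in the image of `1 − ρ(t)`. -/
theorem stmt5 (p n : ℕ) [Fact p.Prime]
    (ρ : Multiplicative (ZMod p) →* AddAut (Fin n → ℤ))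
    (t : ZMod p) (ht : AddSubgroup.zmultiples t = ⊤)
    (x z : Fin n → ℤ)
    (hx : ∑ i ∈ Finset.range p, ((ρ (Multiplicative.ofAdd t)) ^ i) x = 0)
    (hz : ∑ i ∈ Finset.range p, ((ρ (Multiplicative.ofAdd t)) ^ i) z = 0) :
    (∃ γ : Gam p n ρ,
        (Subgroup.zpowers
            (⟨Multiplicative.ofAdd x, Multiplicative.ofAdd t⟩ : Gam p n ρ)).map
            (MulAut.conj γ).toMonoidHom =
          Subgroup.zpowers
            (⟨Multiplicative.ofAdd z, Multiplicative.ofAdd t⟩ : Gam p n ρ)) ↔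
      ∃ w : Fin n → ℤ, x - z = w - ρ (Multiplicative.ofAdd t) w := by
  classical
  have hp : 0 < p := (Fact.out : p.Prime).pos
  set r : AddAut (Fin n → ℤ) := ρ (Multiplicative.ofAdd t) with hrdef
  set a : Gam p n ρ := ⟨Multiplicative.ofAdd x, Multiplicative.ofAdd t⟩ with hadef
  set b : Gam p n ρ := ⟨Multiplicative.ofAdd z, Multiplicative.ofAdd t⟩ with hbdef
  have haL : a.left = Multiplicative.ofAdd x := rfl
  have haR : a.right = Multiplicative.ofAdd t := rfl
  have hbL : b.left = Multiplicative.ofAdd z := rfl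
  set f : (Fin n → ℤ) →+ (Fin n → ℤ) :=
    AddMonoidHom.id (Fin n → ℤ) - r.toAddMonoidHom with hfdef
  have hfapp : ∀ v, f v = v - r v := fun v => rfl
  have hptz : p • t = 0 := by simp [nsmul_eq_mul, ZMod.natCast_self]
  have hrp : r ^ p = 1 := by
    rw [hrdef, ← map_pow, ← ofAdd_nsmul, hptz, ofAdd_zero, map_one]
  have hpowmem : ∀ (y : Fin n → ℤ) (e : ℕ), (r ^ e) y - y ∈ f.range := by
    intro y e
    induction e with
    | zero => show y - y ∈ f.range; simpa using f.range.zero_mem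
    | succ e ih =>
      have h1 : f ((r ^ e) y) ∈ f.range := ⟨_, rfl⟩
      have h2 := f.range.sub_mem ih h1
      have h3 : ((r ^ e) y - y) - f ((r ^ e) y) = (r ^ (e+1)) y - y := by
        rw [hfapp]
        have h4 : (r ^ (e+1)) y = r ((r ^ e) y) := by rw [pow_succ']; rfl
        rw [h4]
        abel
      rwa [h3] at h2
  have hbp : b ^ p = 1 := by
    rw [hbdef, gam_pow, ← hrdef, hz, hptz]
    rfl
  have hordt : addOrderOf t = p := by
    have h1 := Nat.card_zmultiples t
    rw [ht, AddSubgroup.card_top, Nat.card_zmod] at h1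
    exact h1.symm
  constructor
  · rintro ⟨γ, hγ⟩
    have hmem : (MulAut.conj γ) a ∈ Subgroup.zpowers b := by
      rw [← hγ]
      exact ⟨a, Subgroup.mem_zpowers a, rfl⟩
    obtain ⟨k, hk⟩ := hmem
    have hk : b ^ k = (MulAut.conj γ) a := hk
    -- compare right components
    have hright : (Multiplicative.ofAdd t) ^ k = Multiplicative.ofAdd t := by
      have h5 := congrArg SemidirectProduct.rightHom hk
      rw [map_zpow] at h5
      have hra : SemidirectProduct.rightHom ((MulAut.conj γ) a) = Multiplicative.ofAdd t := by
        show SemidirectProduct.rightHom (γ * a * γ⁻¹) = _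
        rw [map_mul, map_mul, map_inv,
          mul_comm (SemidirectProduct.rightHom γ), mul_assoc, mul_inv_cancel, mul_one,
          SemidirectProduct.rightHom_eq_right, haR]
      rw [hra] at h5
      have hrb : SemidirectProduct.rightHom b = Multiplicative.ofAdd t := rfl
      rw [hrb] at h5
      exact h5
    have hkt : (k - 1) • t = 0 := by
      have h6 : k • t = t := by
        have h7 := congrArg Multiplicative.toAdd hright
        rwa [toAdd_zpow, toAdd_ofAdd] at h7
      rw [sub_smul, one_smul, h6, sub_self]
    have hdvd : (p : ℤ) ∣ k - 1 := by
      rw [← hordt]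
      exact addOrderOf_dvd_iff_zsmul_eq_zero.2 hkt
    obtain ⟨m, hm⟩ := hdvd
    have hbk : b ^ k = b := by
      have hk1 : k = 1 + p * m := by omega
      rw [hk1, zpow_add, zpow_one, zpow_mul, zpow_natCast, hbp, one_zpow, mul_one]
    have hconj : (MulAut.conj γ) a = b := by rw [← hk, hbk]
    -- left component of the conjugate
    have hl : ((MulAut.conj γ) a).left =
        γ.left * (addAutToMulAut.comp ρ) γ.right a.left *
          (addAutToMulAut.comp ρ) a.right γ.left⁻¹ := by
      show (γ * a * γ⁻¹).left = _
      rw [SemidirectProduct.mul_left, SemidirectProduct.mul_left, SemidirectProduct.inv_left,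
        ← MulAut.mul_apply, ← map_mul, SemidirectProduct.mul_right,
        mul_comm γ.right a.right, mul_inv_cancel_right, mul_assoc]
    rw [hconj, hbL, haL, haR] at hl
    set v : Fin n → ℤ := Multiplicative.toAdd γ.left with hvdef
    have hladd : z = v + (ρ γ.right) x + -(r v) := by
      have h8 := congrArg Multiplicative.toAdd hl
      simp only [phi_apply, toAdd_mul, toAdd_ofAdd, toAdd_inv, map_neg, ← hrdef] at h8
      exact h8
    -- γ.right is a power of t
    have hs : Multiplicative.toAdd γ.right ∈ AddSubgroup.zmultiples t :=
      ht ▸ AddSubgroup.mem_top _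
    obtain ⟨m', hm'⟩ := hs
    have hm'' : m' • t = Multiplicative.toAdd γ.right := hm'
    have hρs : ρ γ.right = r ^ m' := by
      have h9 : γ.right = Multiplicative.ofAdd (m' • t) := by rw [hm'']; rfl
      rw [h9, ofAdd_zsmul, map_zpow, hrdef]
    obtain ⟨e, he⟩ := zpow_eq_pow_of_pow_eq_one hp hrp m'
    rw [hρs, he] at hladd
    have hxz : x - z ∈ f.range := by
      have h1 : (r ^ e) x - x ∈ f.range := hpowmem x e
      have h2 : f v ∈ f.range := ⟨v, rfl⟩
      have h3 := f.range.sub_mem (f.range.neg_mem h1) h2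
      have h4 : -((r ^ e) x - x) - f v = x - z := by
        rw [hfapp, hladd]
        abel
      rwa [h4] at h3
    obtain ⟨w, hw⟩ := hxz
    exact ⟨w, by rw [← hw, hfapp]⟩
  · rintro ⟨w, hw⟩
    refine ⟨⟨Multiplicative.ofAdd (-w), 1⟩, ?_⟩
    rw [MulEquiv.toMonoidHom_eq_coe, MonoidHom.map_zpowers]
    congr 1
    apply SemidirectProduct.ext
    · show ((⟨Multiplicative.ofAdd (-w), 1⟩ : Gam p n ρ) * a *
        (⟨Multiplicative.ofAdd (-w), 1⟩ : Gam p n ρ)⁻¹).left = b.left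
      rw [SemidirectProduct.mul_left, SemidirectProduct.mul_left, SemidirectProduct.inv_left]
      show Multiplicative.ofAdd (-w) * (addAutToMulAut.comp ρ) 1 a.left *
        (addAutToMulAut.comp ρ) (1 * a.right) ((addAutToMulAut.comp ρ) 1⁻¹
          (Multiplicative.ofAdd (-w))⁻¹) = b.left
      rw [inv_one, map_one, one_mul, MulAut.one_apply, MulAut.one_apply, haL, haR, hbL]
      simp only [phi_apply, toAdd_ofAdd, toAdd_inv, neg_neg, ← ofAdd_add, ← hrdef]
      congr 1
      funext i
      have h := congrFun hw i
      simp only [Pi.sub_apply, Pi.add_apply, Pi.neg_apply] at h ⊢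
      omega
    · show (1 : Multiplicative (ZMod p)) * a.right * 1⁻¹ = b.right
      rw [inv_one, mul_one, one_mul]
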